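/- As p → +∞, the rescaled functions ũ_p converge to W in C¹_loc(ℝ): for every compact set K ⊂ ℝ, one has K ⊂ [-1/μ_p, 1/μ_p] for all p large enough and sup_K |ũ_p - W| → 0 and sup_K |ũ_p' - W'| → 0 as p → +∞, where W(s) = log( 4e^{√2 s} / (1 + e^{√2 s})² ) is the solution of -W'' = e^W on ℝ with W(0) = 0 and W'(0) = 0. -/

import Mathlib

open Real Set Filter Topology

noncomputable section

/-- `u` is the (unique) positive solution of the one-dimensional Lane–Emden problem
`-u'' = u^p` on `(-1,1)` with `u(-1) = u(1) = 0`; it is even, positive on `(-1,1)`,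
decreasing on `[0,1]`, and its sup norm is attained at `0`. -/
def IsLaneEmden (p : ℝ) (u : ℝ → ℝ) : Prop :=
  ContDiff ℝ 2 u ∧
  (∀ t ∈ Ioo (-1 : ℝ) 1, deriv (deriv u) t = -(u t ^ p)) ∧
  u (-1) = 0 ∧ u 1 = 0 ∧
  (∀ t ∈ Ioo (-1 : ℝ) 1, 0 < u t) ∧
  (∀ t : ℝ, u (-t) = u t) ∧
  (∀ ⦃s t : ℝ⦄, s ∈ Icc (0 : ℝ) 1 → t ∈ Icc (0 : ℝ) 1 → s ≤ t → u t ≤ u s) ∧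
  (∀ t ∈ Icc (-1 : ℝ) 1, u t ≤ u 0)

/-- The rescaling parameter `μ_p = (p ‖u_p‖_∞^(p-1))^(-1/2)`. -/
def mup (u : ℝ → ℝ → ℝ) (p : ℝ) : ℝ := (p * u p 0 ^ (p - 1)) ^ (-(1 / 2) : ℝ)

/-- The rescaled function `ũ_p(s) = p (u_p(μ_p s) - u_p(0)) / u_p(0)`. -/
def utilde (u : ℝ → ℝ → ℝ) (p : ℝ) (s : ℝ) : ℝ :=
  p * (u p (mup u p * s) - u p 0) / u p 0

/-- The limit profile `W(s) = log( 4 e^{√2 s} / (1 + e^{√2 s})² )`. -/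
def W (s : ℝ) : ℝ :=
  Real.log (4 * Real.exp (Real.sqrt 2 * s) / (1 + Real.exp (Real.sqrt 2 * s)) ^ 2)

def WD (s : ℝ) : ℝ :=
  Real.sqrt 2 - 2 * (Real.sqrt 2 * Real.exp (Real.sqrt 2 * s) / (1 + Real.exp (Real.sqrt 2 * s)))

def WDD (s : ℝ) : ℝ :=
  -(4 * Real.exp (Real.sqrt 2 * s) / (1 + Real.exp (Real.sqrt 2 * s)) ^ 2)

lemma one_add_exp_pos (a : ℝ) : 0 < 1 + Real.exp a := by positivity

lemma one_add_exp_ne (a : ℝ) : (1 + Real.exp a) ≠ 0 := (one_add_exp_pos a).ne'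

lemma W_eq (s : ℝ) : W s = Real.log 4 + Real.sqrt 2 * s
    - 2 * Real.log (1 + Real.exp (Real.sqrt 2 * s)) := by
  unfold W
  rw [Real.log_div (by positivity) (by positivity), Real.log_mul (by norm_num) (Real.exp_ne_zero _),
    Real.log_exp, Real.log_pow]
  push_cast; ring

lemma exp_W (s : ℝ) : Real.exp (W s)
    = 4 * Real.exp (Real.sqrt 2 * s) / (1 + Real.exp (Real.sqrt 2 * s)) ^ 2 :=
  Real.exp_log (by positivity)

lemma hasDerivAt_W (s : ℝ) : HasDerivAt W (WD s) s := by
  have h1 : HasDerivAt (fun s : ℝ => Real.exp (Real.sqrt 2 * s))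
      (Real.sqrt 2 * Real.exp (Real.sqrt 2 * s)) s := by
    simpa [mul_comm] using ((hasDerivAt_id s).const_mul (Real.sqrt 2)).exp
  have h2 : HasDerivAt (fun s : ℝ => Real.log (1 + Real.exp (Real.sqrt 2 * s)))
      (Real.sqrt 2 * Real.exp (Real.sqrt 2 * s) / (1 + Real.exp (Real.sqrt 2 * s))) s :=
    (h1.const_add 1).log (one_add_exp_ne _)
  have : HasDerivAt (fun s : ℝ => Real.log 4 + Real.sqrt 2 * s
      - 2 * Real.log (1 + Real.exp (Real.sqrt 2 * s))) (WD s) s := by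
    exact ((((hasDerivAt_id s).const_mul (Real.sqrt 2)).const_add (Real.log 4)).sub
      (h2.const_mul 2)).congr_deriv (by simp [WD])
  have hW : W = fun s : ℝ => Real.log 4 + Real.sqrt 2 * s
      - 2 * Real.log (1 + Real.exp (Real.sqrt 2 * s)) := funext W_eq
  rw [hW]; exact this

lemma hasDerivAt_WD (s : ℝ) : HasDerivAt WD (WDD s) s := by
  have h1 : HasDerivAt (fun s : ℝ => Real.exp (Real.sqrt 2 * s))
      (Real.sqrt 2 * Real.exp (Real.sqrt 2 * s)) s := by
    simpa [mul_comm] using ((hasDerivAt_id s).const_mul (Real.sqrt 2)).exp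
  have h3 : HasDerivAt (fun s : ℝ => Real.sqrt 2 * Real.exp (Real.sqrt 2 * s) / (1 + Real.exp (Real.sqrt 2 * s)))
      ((Real.sqrt 2 * (Real.sqrt 2 * Real.exp (Real.sqrt 2 * s)) * (1 + Real.exp (Real.sqrt 2 * s))
        - Real.sqrt 2 * Real.exp (Real.sqrt 2 * s) * (Real.sqrt 2 * Real.exp (Real.sqrt 2 * s)))
        / (1 + Real.exp (Real.sqrt 2 * s)) ^ 2) s :=
    (h1.const_mul (Real.sqrt 2)).div (h1.const_add 1) (one_add_exp_ne _)
  have h4 := (h3.const_mul 2).const_sub (Real.sqrt 2)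
  refine h4.congr_deriv ?_
  have hs : Real.sqrt 2 * Real.sqrt 2 = 2 := Real.mul_self_sqrt (by norm_num)
  unfold WDD
  field_simp
  ring_nf
  nlinarith [Real.exp_pos (Real.sqrt 2 * s), hs]

lemma deriv_W (s : ℝ) : deriv W s = WD s := (hasDerivAt_W s).deriv

lemma deriv_WD (s : ℝ) : deriv WD s = WDD s := (hasDerivAt_WD s).deriv

lemma deriv_deriv_W (s : ℝ) : deriv (deriv W) s = -Real.exp (W s) := by
  have : deriv W = WD := funext deriv_W
  rw [this, deriv_WD, exp_W, WDD]

lemma W_zero : W 0 = 0 := by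
  rw [W_eq]
  have : (4 : ℝ) = 2 ^ 2 := by norm_num
  simp [this, Real.log_pow]
  ring_nf

lemma WD_zero : WD 0 = 0 := by
  unfold WD
  simp
  field_simp
  ring_nf

lemma W_nonpos (s : ℝ) : W s ≤ 0 := by
  apply Real.log_nonpos (by positivity)
  rw [div_le_one (by positivity)]
  nlinarith [Real.exp_pos (Real.sqrt 2 * s), sq_nonneg (1 - Real.exp (Real.sqrt 2 * s))]

lemma W_even (s : ℝ) : W (-s) = W s := by
  unfold W
  congr 1
  have h : Real.sqrt 2 * (-s) = -(Real.sqrt 2 * s) := by ring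
  rw [h, Real.exp_neg]
  have := Real.exp_ne_zero (Real.sqrt 2 * s)
  field_simp
  ring

lemma sq_exp_le (x : ℝ) (hx : x ≤ 0) : x ^ 2 * Real.exp x ≤ 4 := by
  have h1 : (1 + (-x)/2) ^ 2 ≤ (Real.exp (-x/2)) ^ 2 := by
    have := Real.add_one_le_exp (-x/2)
    nlinarith [this, (by linarith : (0:ℝ) ≤ -x)]
  have h2 : (Real.exp (-x/2)) ^ 2 = Real.exp (-x) := by
    rw [sq, ← Real.exp_add]; congr 1; ring
  have h3 : x ^ 2 / 4 ≤ Real.exp (-x) := by nlinarith [(by linarith : (0:ℝ) ≤ -x)]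
  have h4 : Real.exp (-x) * Real.exp x = 1 := by
    rw [← Real.exp_add]; simp
  nlinarith [Real.exp_pos x, Real.exp_pos (-x)]

lemma base_pos (p x : ℝ) (hp : 0 < p) (hx1 : -p < x) : 0 < 1 + x / p := by
  have : -1 < x / p := by
    rw [neg_lt, ← neg_div]
    exact (div_lt_one hp).2 (by linarith)
  linarith

lemma rpow_le_exp (p x : ℝ) (hp : 0 < p) (hx1 : -p < x) :
    (1 + x / p) ^ p ≤ Real.exp x := by
  have hb := base_pos p x hp hx1
  rw [Real.rpow_def_of_pos hb, Real.exp_le_exp]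
  have h := Real.log_le_sub_one_of_pos hb
  calc Real.log (1 + x / p) * p ≤ (1 + x / p - 1) * p := by nlinarith
    _ = x := by field_simp; ring

lemma exp_sub_rpow_le (p x : ℝ) (hp : 2 ≤ p) (hx1 : -p < x) (hx : x ≤ 0) :
    Real.exp x - (1 + x / p) ^ p ≤ 8 / p := by
  have hp0 : (0:ℝ) < p := by linarith
  have hb := base_pos p x hp0 hx1
  rcases le_or_gt (-(p/2)) x with hcase | hcase
  · -- x ∈ [-p/2, 0]
    have hpx : 0 < p + x := by linarith
    -- g := x - p * log (1 + x/p) ∈ [0, x^2/(p+x)]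
    set g : ℝ := x - Real.log (1 + x / p) * p with hg
    have hlog_le : Real.log (1 + x / p) ≤ x / p := by
      have h := Real.log_le_sub_one_of_pos hb; linarith
    have hg0 : 0 ≤ g := by
      have hlx : Real.log (1 + x / p) * p ≤ x := by
        calc Real.log (1 + x / p) * p ≤ (x/p) * p :=
              mul_le_mul_of_nonneg_right hlog_le hp0.le
          _ = x := by field_simp
      rw [hg]; linarith
    have hlog_ge : 1 - (1 + x / p)⁻¹ ≤ Real.log (1 + x / p) := by
      have h := Real.log_le_sub_one_of_pos (inv_pos.2 hb)
      rw [Real.log_inv] at h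
      linarith
    have hgle : g ≤ x ^ 2 / (p + x) := by
      have hinv : (1 + x / p)⁻¹ = p / (p + x) := by
        have hh : 1 + x / p = (p + x) / p := by field_simp
        rw [hh, inv_div]
      have : 1 - p / (p + x) ≤ Real.log (1 + x / p) := by rw [← hinv]; exact hlog_ge
      have h2 : (1 - p / (p + x)) * p ≤ Real.log (1 + x / p) * p := by nlinarith
      have h3 : (1 - p / (p + x)) * p = p - p ^ 2/ (p + x) := by ring
      have h4 : x - (p - p ^ 2 / (p + x)) = x ^ 2 / (p + x) := by
        field_simp; ring
      rw [hg]; linarith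
    have hrw : (1 + x / p) ^ p = Real.exp x * Real.exp (-g) := by
      rw [Real.rpow_def_of_pos hb, ← Real.exp_add]
      congr 1; rw [hg]; ring
    have h1mg : 1 - g ≤ Real.exp (-g) := by
      have := Real.add_one_le_exp (-g); linarith
    have key : Real.exp x - (1 + x / p) ^ p ≤ Real.exp x * g := by
      rw [hrw]; nlinarith [Real.exp_pos x]
    have hxx : Real.exp x * g ≤ Real.exp x * (x ^ 2 / (p + x)) := by
      nlinarith [Real.exp_pos x]
    have hfin : Real.exp x * (x ^ 2 / (p + x)) ≤ 8 / p := by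
      have hsq := sq_exp_le x hx
      have hpx2 : p / 2 ≤ p + x := by linarith
      have h1 : Real.exp x * (x ^ 2 / (p + x)) = (x ^ 2 * Real.exp x) / (p + x) := by
        field_simp
      rw [h1, div_le_div_iff₀ hpx hp0]
      nlinarith [mul_nonneg (sq_nonneg x) (Real.exp_pos x).le]
    linarith
  · -- x < -p/2
    have h1 : Real.exp x ≤ Real.exp (-(p/2)) := Real.exp_le_exp.2 (le_of_lt hcase)
    have h2 : Real.exp (-(p/2)) ≤ 2 / p := by
      rw [le_div_iff₀ hp0]
      have hmul : Real.exp (-(p/2)) * Real.exp (p/2) = 1 := by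
        rw [← Real.exp_add]; simp
      nlinarith [Real.add_one_le_exp (p/2), Real.exp_pos (p/2), Real.exp_pos (-(p/2))]
    have h3 : 0 ≤ (1 + x / p) ^ p := le_of_lt (Real.rpow_pos_of_pos hb p)
    have h4 : (2:ℝ)/p ≤ 8/p := by
      rw [div_le_div_iff₀ hp0 hp0]; nlinarith
    linarith


lemma lane_emden_smooth {u : ℝ → ℝ} (h : ContDiff ℝ 2 u) :
    Differentiable ℝ (deriv u) ∧ Continuous (deriv (deriv u)) := by
  rw [show (2 : WithTop ℕ∞) = 1 + 1 from rfl, contDiff_succ_iff_deriv] at h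
  exact contDiff_one_iff_deriv.mp h.2.2

lemma lane_emden_deriv_zero {u : ℝ → ℝ} (heven : ∀ t : ℝ, u (-t) = u t) :
    deriv u 0 = 0 := by
  have h1 : (fun t : ℝ => u (-t)) = u := funext heven
  have h2 := deriv_comp_neg u (0 : ℝ)
  rw [h1, neg_zero] at h2
  linarith

lemma lane_emden_M {p : ℝ} {u : ℝ → ℝ} (h : IsLaneEmden p u) (hp : 1 < p) :
    2 ≤ u 0 ^ (p - 1) := by
  obtain ⟨hC2, hODE, hm1, h1, hpos, heven, hmono, hmax⟩ := h
  obtain ⟨hd1, hcont2⟩ := lane_emden_smooth hC2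
  set M := u 0 with hMdef
  have hM : 0 < M := hpos 0 (by norm_num)
  have hMp : 0 < M ^ p := Real.rpow_pos_of_pos hM p
  have hder1 : ∀ t, HasDerivAt u (deriv u t) t :=
    fun t => ((hC2.differentiable (by norm_num)) t).hasDerivAt
  have hder2 : ∀ t, HasDerivAt (deriv u) (deriv (deriv u) t) t :=
    fun t => (hd1 t).hasDerivAt
  have hu'0 : deriv u 0 = 0 := lane_emden_deriv_zero heven
  -- pointwise lower bound on u'' in [0, b] for b < 1
  have key : ∀ b ∈ Ico (0:ℝ) 1, M - M ^ p / 2 ≤ u b := by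
    intro b hb
    have hsub : Icc (0:ℝ) b ⊆ Ioo (-1:ℝ) 1 := fun t ht =>
      ⟨by linarith [ht.1], lt_of_le_of_lt ht.2 hb.2⟩
    have hdd_low : ∀ t ∈ Icc (0:ℝ) b, -(M ^ p) ≤ deriv (deriv u) t := by
      intro t ht
      rw [hODE t (hsub ht)]
      have h0 : 0 ≤ u t := (hpos t (hsub ht)).le
      have hle : u t ≤ M := hmax t ⟨by linarith [(hsub ht).1], by linarith [(hsub ht).2]⟩
      have := Real.rpow_le_rpow h0 hle (by linarith : (0:ℝ) ≤ p)
      linarith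
    have hd_low : ∀ t ∈ Icc (0:ℝ) b, -(t * M ^ p) ≤ deriv u t := by
      intro t ht
      have hftc : ∫ τ in (0:ℝ)..t, deriv (deriv u) τ = deriv u t - deriv u 0 :=
        intervalIntegral.integral_eq_sub_of_hasDerivAt (fun τ _ => hder2 τ)
          (hcont2.intervalIntegrable 0 t)
      have hmono2 : ∫ τ in (0:ℝ)..t, -(M ^ p) ≤ ∫ τ in (0:ℝ)..t, deriv (deriv u) τ := by
        apply intervalIntegral.integral_mono_on ht.1
          (intervalIntegrable_const) (hcont2.intervalIntegrable 0 t)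
        intro x hx
        exact hdd_low x ⟨hx.1, le_trans hx.2 ht.2⟩
      rw [hftc, hu'0, intervalIntegral.integral_const, smul_eq_mul] at hmono2
      have : (t - 0) * -(M ^ p) = -(t * M ^ p) := by ring
      linarith [hmono2, this.symm.le]
    have hftc2 : ∫ t in (0:ℝ)..b, deriv u t = u b - u 0 :=
      intervalIntegral.integral_eq_sub_of_hasDerivAt (fun t _ => hder1 t)
        ((hd1.continuous).intervalIntegrable 0 b)
    have hmono3 : ∫ t in (0:ℝ)..b, -(t * M ^ p) ≤ ∫ t in (0:ℝ)..b, deriv u t := by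
      apply intervalIntegral.integral_mono_on hb.1
        ((continuous_id.mul continuous_const).neg.intervalIntegrable 0 b)
        ((hd1.continuous).intervalIntegrable 0 b)
      exact hd_low
    have hcomp : ∫ t in (0:ℝ)..b, -(t * M ^ p) = -(b ^ 2 / 2 * M ^ p) := by
      rw [show (fun t : ℝ => -(t * M ^ p)) = fun t : ℝ => t * -(M ^ p) by funext t; ring]
      rw [intervalIntegral.integral_mul_const, integral_id]
      ring
    rw [hftc2] at hmono3
    rw [hcomp] at hmono3
    have hb2 : b ^ 2 ≤ 1 := by nlinarith [hb.1, hb.2]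
    nlinarith
  -- pass to the limit b → 1⁻
  have htend : Tendsto u (𝓝[<] (1:ℝ)) (𝓝 (u 1)) :=
    (hC2.continuous.continuousAt).continuousWithinAt
  have hev : ∀ᶠ b in 𝓝[<] (1:ℝ), M - M ^ p / 2 ≤ u b := by
    filter_upwards [Ioo_mem_nhdsLT_of_mem (by norm_num : (1:ℝ) ∈ Ioc (0:ℝ) 1)] with b hb
    exact key b ⟨hb.1.le, hb.2⟩
  have hle : M - M ^ p / 2 ≤ u 1 := ge_of_tendsto htend hev
  rw [h1] at hle
  have hsplit : M ^ p = M ^ (p - 1) * M := by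
    rw [show p = (p - 1) + 1 by ring, Real.rpow_add hM, Real.rpow_one]
    ring_nf
  rw [hsplit] at hle
  have : 2 * M ≤ M ^ (p - 1) * M := by linarith
  exact le_of_mul_le_mul_right (by linarith) hM

lemma exp_lip {a b : ℝ} (ha : a ≤ 0) (hb : b ≤ 0) :
    |Real.exp a - Real.exp b| ≤ |a - b| := by
  have key : ∀ x y : ℝ, x ≤ y → y ≤ 0 → Real.exp y - Real.exp x ≤ y - x := by
    intro x y hxy hy
    have hmul : Real.exp y * Real.exp (x - y) = Real.exp x := by
      rw [← Real.exp_add]; congr 1; ring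
    have h1 : 1 + (x - y) ≤ Real.exp (x - y) := by
      linarith [Real.add_one_le_exp (x - y)]
    have h2 : Real.exp y ≤ 1 := by
      rw [← Real.exp_zero]; exact Real.exp_le_exp.2 hy
    nlinarith [Real.exp_pos y]
  rcases le_total a b with h | h
  · rw [abs_sub_comm, abs_of_nonneg (by simp [Real.exp_le_exp, h]),
      abs_sub_comm, abs_of_nonneg (by linarith)]
    exact key a b h hb
  · rw [abs_of_nonneg (by simp [Real.exp_le_exp, h]), abs_of_nonneg (by linarith)]
    exact key b a h ha

set_option maxHeartbeats 1600000 in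
lemma main_est (u : ℝ → ℝ → ℝ) (p R : ℝ) (hL : IsLaneEmden p (u p)) (hp2 : 2 ≤ p)
    (hR : 0 ≤ R) (hdom : (R + 1) ^ 2 ≤ 2 * p) :
    R + 1 ≤ 1 / mup u p ∧ ∀ s : ℝ, |s| ≤ R →
      |utilde u p s - W s| ≤ 8 / p * Real.exp R ∧
      |deriv (utilde u p) s - deriv W s| ≤ 8 / p * Real.exp R := by
  have hp1 : (1:ℝ) < p := by linarith
  have hp0 : (0:ℝ) < p := by linarith
  have hM2 : 2 ≤ u p 0 ^ (p - 1) := lane_emden_M hL hp1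
  obtain ⟨hC2, hODE, hm1, h1, hpos, heven, hmono, hmax⟩ := hL
  obtain ⟨hd1, hcont2⟩ := lane_emden_smooth hC2
  set M := u p 0 with hMdef
  have hM : 0 < M := hpos 0 (by norm_num)
  have hMp1 : (0:ℝ) < M ^ (p - 1) := Real.rpow_pos_of_pos hM _
  set A := p * M ^ (p - 1) with hAdef
  have hA : 0 < A := by positivity
  have hA2 : 2 * p ≤ A := by nlinarith
  have hmu_def : mup u p = A ^ (-(1/2) : ℝ) := rfl
  set μ := mup u p with hμdef
  have hμpos : 0 < μ := by rw [hmu_def]; exact Real.rpow_pos_of_pos hA _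
  have hμmul : μ * A ^ ((1/2) : ℝ) = 1 := by
    rw [hmu_def, ← Real.rpow_add hA]; norm_num
  have hμsq : μ * μ * A = 1 := by
    have : μ * μ = A⁻¹ := by
      rw [hmu_def, ← Real.rpow_add hA]
      norm_num
      exact Real.rpow_neg_one A
    rw [this, inv_mul_cancel₀ hA.ne']
  have hinv : 1 / μ = A ^ ((1/2) : ℝ) :=
    (eq_one_div_of_mul_eq_one_right hμmul).symm
  have hhalf : R + 1 ≤ A ^ ((1/2) : ℝ) := by
    have h1' : ((R+1) ^ 2 : ℝ) ^ ((1/2):ℝ) ≤ A ^ ((1/2):ℝ) :=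
      Real.rpow_le_rpow (by positivity) (le_trans hdom hA2) (by norm_num)
    have h2' : ((R+1) ^ 2 : ℝ) ^ ((1/2):ℝ) = R + 1 := by
      rw [← Real.rpow_natCast (R+1) 2, ← Real.rpow_mul (by positivity)]
      norm_num
    linarith
  have hdom1 : R + 1 ≤ 1 / μ := by rw [hinv]; exact hhalf
  refine ⟨hdom1, ?_⟩
  -- basic facts
  have hμR : μ * R < 1 := by
    have h1' : μ * (R + 1) ≤ μ * (A ^ ((1/2):ℝ)) :=
      mul_le_mul_of_nonneg_left hhalf hμpos.le
    rw [hμmul] at h1'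
    nlinarith
  have hin : ∀ s : ℝ, |s| ≤ R → μ * s ∈ Ioo (-1:ℝ) 1 := by
    intro s hs
    have h1' : |μ * s| < 1 := by
      rw [abs_mul, abs_of_pos hμpos]
      calc μ * |s| ≤ μ * R := mul_le_mul_of_nonneg_left hs hμpos.le
        _ < 1 := hμR
    exact ⟨by linarith [abs_lt.1 h1'] , (abs_lt.1 h1').2⟩
  have hder1 : ∀ t, HasDerivAt (u p) (deriv (u p) t) t :=
    fun t => ((hC2.differentiable (by norm_num)) t).hasDerivAt
  have hder2 : ∀ t, HasDerivAt (deriv (u p)) (deriv (deriv (u p)) t) t :=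
    fun t => (hd1 t).hasDerivAt
  have hu'0 : deriv (u p) 0 = 0 := lane_emden_deriv_zero heven
  -- derivative of utilde
  have hUT : ∀ s : ℝ, HasDerivAt (utilde u p) (p / M * (deriv (u p) (μ * s) * μ)) s := by
    intro s
    have hueq : utilde u p = fun s => p / M * u p (μ * s) - p := by
      funext t; unfold utilde; rw [← hμdef, ← hMdef]; field_simp
    rw [hueq]
    have hc : HasDerivAt (fun s : ℝ => u p (μ * s)) (deriv (u p) (μ * s) * μ) s := by
      have := (hder1 (μ * s)).comp s ((hasDerivAt_id s).const_mul μ)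
      exact this.congr_deriv (by simp)
    exact (hc.const_mul (p / M)).sub_const p
  set v1 : ℝ → ℝ := fun s => p / M * (deriv (u p) (μ * s) * μ) with hv1def
  have hV1 : ∀ s : ℝ, HasDerivAt v1 (p / M * (deriv (deriv (u p)) (μ * s) * μ * μ)) s := by
    intro s
    have hc : HasDerivAt (fun s : ℝ => deriv (u p) (μ * s))
        (deriv (deriv (u p)) (μ * s) * μ) s := by
      have := (hder2 (μ * s)).comp s ((hasDerivAt_id s).const_mul μ)
      exact this.congr_deriv (by simp)
    have := (hc.mul_const μ).const_mul (p / M)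
    simpa [mul_assoc] using this
  -- rescaled equation
  have hform : ∀ s : ℝ, |s| ≤ R → 1 + utilde u p s / p = u p (μ * s) / M := by
    intro s hs; unfold utilde; rw [← hμdef, ← hMdef]; field_simp; ring
  have hval : ∀ s : ℝ, |s| ≤ R →
      p / M * (-(u p (μ * s) ^ p) * μ * μ) = -((1 + utilde u p s / p) ^ p) := by
    intro s hs
    have hU : 0 < u p (μ * s) := hpos _ (hin s hs)
    rw [hform s hs, Real.div_rpow hU.le hM.le]
    have hsplit : M ^ p = M ^ (p - 1) * M := by
      rw [show p = (p - 1) + 1 by ring, Real.rpow_add hM, Real.rpow_one]; ring_nf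
    rw [hsplit]
    have key : p * (μ * μ) * M ^ (p - 1) = 1 := by
      rw [hAdef] at hμsq; linarith [hμsq]
    field_simp
    linear_combination (-1 : ℝ) * key
  -- Gronwall
  set η : ℝ → ℝ := fun s => utilde u p s - W s with hηdef
  set η' : ℝ → ℝ := fun s => v1 s - WD s with hη'def
  set f : ℝ → ℝ × ℝ := fun t => (η t, η' t) with hfdef
  have hfd : ∀ t : ℝ, HasDerivAt f
      (η' t, p / M * (deriv (deriv (u p)) (μ * t) * μ * μ) - WDD t) t := by
    intro t
    have h1' : HasDerivAt η (v1 t - WD t) t := (hUT t).sub (hasDerivAt_W t)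
    have h2' : HasDerivAt η' (p / M * (deriv (deriv (u p)) (μ * t) * μ * μ) - WDD t) t :=
      (hV1 t).sub (hasDerivAt_WD t)
    exact h1'.prodMk h2'
  have hdifff : Differentiable ℝ f := fun t => (hfd t).differentiableAt
  have hcontf : Continuous f := hdifff.continuous
  have hgron : ∀ t ∈ Icc (0:ℝ) R, ‖f t‖ ≤ gronwallBound 0 1 (8/p) (t - 0) := by
    apply norm_le_gronwallBound_of_norm_deriv_right_le (f' := fun t =>
      (η' t, -((1 + utilde u p t / p) ^ p) - WDD t)) hcontf.continuousOn
    · intro t ht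
      have ht' : |t| ≤ R := by rw [abs_of_nonneg ht.1]; exact ht.2.le
      have := hfd t
      rw [hODE _ (hin t ht'), hval t ht'] at this
      exact this.hasDerivWithinAt
    · -- ‖f 0‖ ≤ 0
      have hη0 : η 0 = 0 := by
        simp only [hηdef, W_zero]
        unfold utilde; rw [← hμdef, ← hMdef, mul_zero]; simp [hMdef]
      have hη'0 : η' 0 = 0 := by
        simp only [hη'def, hv1def, WD_zero, mul_zero, hu'0]
        ring
      rw [hfdef]
      simp only [hη0, hη'0]
      simp [Prod.norm_def]
    · intro t ht
      have ht' : |t| ≤ R := by rw [abs_of_nonneg ht.1]; exact ht.2.le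
      have hU : 0 < u p (μ * t) := hpos _ (hin t ht')
      have hUM : u p (μ * t) ≤ M := hmax _
        ⟨by linarith [(hin t ht').1], by linarith [(hin t ht').2]⟩
      have hutle : utilde u p t ≤ 0 := by
        unfold utilde; rw [← hμdef, ← hMdef]
        apply div_nonpos_of_nonpos_of_nonneg _ hM.le
        nlinarith
      have hutgt : -p < utilde u p t := by
        unfold utilde; rw [← hμdef, ← hMdef]
        rw [lt_div_iff₀ hM]
        nlinarith
      have hWle : W t ≤ 0 := W_nonpos t
      have hWDD : WDD t = -Real.exp (W t) := by
        rw [exp_W]; rfl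
      have hb1 : |(1 + utilde u p t / p) ^ p - Real.exp (utilde u p t)| ≤ 8 / p := by
        rw [abs_sub_comm, abs_of_nonneg (sub_nonneg.2 (rpow_le_exp p _ hp0 hutgt))]
        exact exp_sub_rpow_le p _ hp2 hutgt hutle
      have hb2 : |Real.exp (utilde u p t) - Real.exp (W t)| ≤ |η t| :=
        exp_lip hutle hWle
      have hgb : |(-((1 + utilde u p t / p) ^ p) - WDD t)| ≤ 8 / p + |η t| := by
        rw [hWDD]
        have : -((1 + utilde u p t / p) ^ p) - -Real.exp (W t)
            = (Real.exp (W t) - Real.exp (utilde u p t))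
              + (Real.exp (utilde u p t) - (1 + utilde u p t / p) ^ p) := by ring
        rw [this]
        calc _ ≤ |Real.exp (W t) - Real.exp (utilde u p t)|
              + |Real.exp (utilde u p t) - (1 + utilde u p t / p) ^ p| := abs_add_le _ _
          _ ≤ 8 / p + |η t| := by
              have e1 := abs_sub_comm (Real.exp (W t)) (Real.exp (utilde u p t))
              have e2 := abs_sub_comm (Real.exp (utilde u p t))
                ((1 + utilde u p t / p) ^ p)
              linarith
      rw [Prod.norm_def]
      simp only [Real.norm_eq_abs]
      have hfnorm : ‖f t‖ = max |η t| |η' t| := by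
        rw [Prod.norm_def]; rfl
      rw [hfnorm]
      apply max_le
      · calc |η' t| ≤ max |η t| |η' t| := le_max_right _ _
          _ ≤ 1 * max |η t| |η' t| + 8/p := by
              have : (0:ℝ) ≤ 8/p := by positivity
              linarith [le_max_right |η t| |η' t|]
      · calc |(-((1 + utilde u p t / p) ^ p) - WDD t)| ≤ 8/p + |η t| := hgb
          _ ≤ 1 * max |η t| |η' t| + 8/p := by
              linarith [le_max_left |η t| |η' t|]
  -- unpack the Gronwall bound
  have hbound : ∀ t ∈ Icc (0:ℝ) R, |η t| ≤ 8 / p * Real.exp R ∧ |η' t| ≤ 8 / p * Real.exp R := by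
    intro t ht
    have h1' := hgron t ht
    rw [sub_zero, gronwallBound_of_K_ne_0 one_ne_zero] at h1'
    simp only [zero_mul, one_mul, zero_add] at h1'
    have h2' : (8/p) / 1 * (Real.exp t - 1) ≤ 8 / p * Real.exp R := by
      have he : Real.exp t ≤ Real.exp R := Real.exp_le_exp.2 ht.2
      have : (0:ℝ) ≤ 8/p := by positivity
      rw [div_one]
      nlinarith [Real.exp_pos t]
    have hfnorm : ‖f t‖ = max |η t| |η' t| := by rw [Prod.norm_def]; rfl
    rw [hfnorm] at h1'
    constructor
    · exact le_trans (le_trans (le_max_left _ _) h1') h2'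
    · exact le_trans (le_trans (le_max_right _ _) h1') h2'
  -- symmetry for negative s
  have hUTeven : ∀ s : ℝ, utilde u p (-s) = utilde u p s := by
    intro s; unfold utilde; rw [← hμdef, mul_neg, heven]
  have huodd : ∀ x : ℝ, deriv (u p) (-x) = -(deriv (u p) x) := by
    intro x
    have h1' : (fun t : ℝ => u p (-t)) = u p := funext heven
    have h2' := deriv_comp_neg (u p) x
    rw [h1'] at h2'
    linarith
  have hWDodd : ∀ s : ℝ, WD (-s) = -(WD s) := by
    intro s
    have h1' : (fun t : ℝ => W (-t)) = W := funext W_even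
    have h2' := deriv_comp_neg W s
    rw [h1', deriv_W, deriv_W] at h2'
    linarith
  have hηeven : ∀ s : ℝ, η (-s) = η s := by
    intro s; simp only [hηdef]; rw [hUTeven, W_even]
  have hη'odd : ∀ s : ℝ, η' (-s) = -(η' s) := by
    intro s; simp only [hη'def, hv1def]
    rw [mul_neg, huodd, hWDodd]; ring
  intro s hs
  have hds : deriv (utilde u p) s - deriv W s = η' s := by
    rw [(hUT s).deriv, deriv_W]
  have hgoal : |η s| ≤ 8 / p * Real.exp R ∧ |η' s| ≤ 8 / p * Real.exp R := by
    rcases le_total 0 s with hsgn | hsgn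
    · exact hbound s ⟨hsgn, by rwa [abs_of_nonneg hsgn] at hs⟩
    · have h1' := hbound (-s) ⟨by linarith, by rwa [abs_of_nonpos hsgn] at hs⟩
      rw [hηeven, hη'odd, abs_neg] at h1'
      exact h1'
  exact ⟨hgoal.1, by rw [hds]; exact hgoal.2⟩


/-- As `p → +∞`, the rescaled functions `ũ_p` converge to `W` in `C¹_loc(ℝ)`, where
`W(s) = log(4 e^{√2 s}/(1+e^{√2 s})²)` is the solution of `-W'' = e^W`, `W(0) = W'(0) = 0`. -/
theorem rescaled_convergence_to_W
    (u : ℝ → ℝ → ℝ) (hu : ∀ p : ℝ, 1 < p → IsLaneEmden p (u p)) :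
    ((∀ s : ℝ, deriv (deriv W) s = -Real.exp (W s)) ∧ W 0 = 0 ∧ deriv W 0 = 0) ∧
    ∀ K : Set ℝ, IsCompact K →
      (∃ p₀ : ℝ, ∀ p ≥ p₀, ∀ s ∈ K, |s| ≤ 1 / mup u p) ∧
      (∀ ε > (0 : ℝ), ∃ p₀ : ℝ, ∀ p ≥ p₀, ∀ s ∈ K,
        |utilde u p s - W s| < ε ∧ |deriv (utilde u p) s - deriv W s| < ε) := by
  constructor
  · exact ⟨deriv_deriv_W, W_zero, by rw [deriv_W]; exact WD_zero⟩
  · intro K hK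
    obtain ⟨r, hr⟩ := hK.isBounded.subset_closedBall 0
    set R := max r 0 with hRdef
    have hR : 0 ≤ R := le_max_right r 0
    have hKR : ∀ s ∈ K, |s| ≤ R := by
      intro s hs
      have h := hr hs
      rw [Metric.mem_closedBall, Real.dist_eq, sub_zero] at h
      exact le_trans h (le_max_left r 0)
    constructor
    · refine ⟨max 2 ((R+1)^2/2), fun p hp s hs => ?_⟩
      have hp2 : 2 ≤ p := le_trans (le_max_left _ _) hp
      have hdom : (R+1)^2 ≤ 2*p := by
        have := le_trans (le_max_right _ _) hp; linarith
      have h := (main_est u p R (hu p (by linarith)) hp2 hR hdom).1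
      exact le_trans (hKR s hs) (by linarith)
    · intro ε hε
      refine ⟨max (max 2 ((R+1)^2/2)) (8 * Real.exp R / ε + 1), fun p hp s hs => ?_⟩
      have hp2 : 2 ≤ p := le_trans (le_trans (le_max_left _ _) (le_max_left _ _)) hp
      have hdom : (R+1)^2 ≤ 2*p := by
        have := le_trans (le_trans (le_max_right _ _) (le_max_left _ _)) hp; linarith
      have hpε : 8 * Real.exp R / ε + 1 ≤ p := le_trans (le_max_right _ _) hp
      have hp0 : (0:ℝ) < p := by linarith
      have hlt : 8 / p * Real.exp R < ε := by
        rw [div_mul_eq_mul_div, div_lt_iff₀ hp0]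
        have h8 : 8 * Real.exp R / ε < p := by linarith
        rw [div_lt_iff₀ hε] at h8
        linarith
      have h := (main_est u p R (hu p (by linarith)) hp2 hR hdom).2 s (hKR s hs)
      exact ⟨lt_of_le_of_lt h.1 hlt, lt_of_le_of_lt h.2 hlt⟩
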